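/- Graph-theoretic step used in the proof of Corollary 3.10 ('b(S) = 0 iff Γ(S) is a tree iff S ⊆ X_sing^sep'): let D : V → ℤ be a divisor, and let c be the number of connected components of the graph on V in which distinct i, j are adjacent iff m i j > 0 and D i = D j. Then Σ_{{i,j} unordered, D i ≠ D j} m i j = c − 1 if and only if every pair (i, j) with m i j > 0 and D i ≠ D j is separating. (The left side is the cardinality of S(D), the set of nodes joining components with different coefficients of D.) -/

import Mathlib

open Finset

variable {V : Type*}

/-- The multidegree of a divisor `D` on the nodal curve with dual multigraph `m`:
`(deg D) j = ∑ i, (D i - D j) * m i j`. -/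
def mdeg [Fintype V] (m : V → V → ℕ) (D : V → ℤ) : V → ℤ :=
  fun j => ∑ i, (D i - D j) * (m i j : ℤ)

/-- `k_Z`: the number of nodes where the subcurve `Z` meets its complementary curve. -/
def kdeg [Fintype V] [DecidableEq V] (m : V → V → ℕ) (Z : Finset V) : ℕ :=
  ∑ i ∈ Z, ∑ j ∈ Zᶜ, m i j

/-- The pair `(i, j)` (with `m i j > 0`) corresponds to a separating node:
`m i j = 1` and the edge `{i, j}` is a bridge of `G`. -/
def Separating (m : V → V → ℕ) (G : SimpleGraph V) (i j : V) : Prop :=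
  m i j = 1 ∧ G.IsBridge s(i, j)

/-- A tail: a nonempty proper subcurve meeting its complement in a single node. -/
def IsTail [Fintype V] [DecidableEq V] (m : V → V → ℕ) (Q : Finset V) : Prop :=
  Q.Nonempty ∧ Q ≠ Finset.univ ∧ kdeg m Q = 1

/-- A divisor is a sum of tails if `D = c·1_V + ∑ h a_h · 1_{Q_h}` with the `Q_h` tails. -/
def SumOfTails [Fintype V] [DecidableEq V] (m : V → V → ℕ) (D : V → ℤ) : Prop :=
  ∃ (c : ℤ) (k : ℕ) (a : Fin k → ℤ) (Q : Fin k → Finset V),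
    (∀ h, IsTail m (Q h)) ∧
    ∀ i, D i = c + ∑ h, a h * (if i ∈ Q h then 1 else 0)

/-- `Λ_X`: the group of multidegrees of twisters, i.e. the image of `mdeg`. -/
def Lambda [Fintype V] (m : V → V → ℕ) : Set (V → ℤ) := Set.range (mdeg m)

/-- `Λ_X^0`: multidegrees of sums of tails. -/
def Lambda0 [Fintype V] [DecidableEq V] (m : V → V → ℕ) : Set (V → ℤ) :=
  {t | ∃ D, SumOfTails m D ∧ mdeg m D = t}

/-- The essential connectivity `ε(X)`: the infimum of `k_Z` over nonempty proper `Z ⊆ V`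
such that some pair `(i,j)` with `i ∈ Z`, `j ∉ Z`, `m i j > 0` is not separating. -/
noncomputable def eps [Fintype V] [DecidableEq V] (m : V → V → ℕ) (G : SimpleGraph V) : ℕ∞ :=
  sInf ((fun Z : Finset V => (kdeg m Z : ℕ∞)) ''
    {Z | Z.Nonempty ∧ Z ≠ Finset.univ ∧
      ∃ i ∈ Z, ∃ j, j ∉ Z ∧ 0 < m i j ∧ ¬ Separating m G i j})


section Helpers
open SimpleGraph

private lemma reach_del_aux (G : SimpleGraph V) (u v : V) {w x : V} (p : G.Walk w x) :
    (G.deleteEdges {s(u,v)}).Reachable w x ∨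
      (((G.deleteEdges {s(u,v)}).Reachable w u ∨ (G.deleteEdges {s(u,v)}).Reachable w v) ∧
       ((G.deleteEdges {s(u,v)}).Reachable x u ∨ (G.deleteEdges {s(u,v)}).Reachable x v)) := by
  induction p with
  | nil => exact Or.inl (Reachable.refl _)
  | @cons a b c hadj p ih =>
    by_cases hc : s(a, b) = s(u, v)
    · rw [Sym2.eq_iff] at hc
      right
      refine ⟨?_, ?_⟩
      · rcases hc with ⟨rfl, rfl⟩ | ⟨rfl, rfl⟩
        · exact Or.inl (Reachable.refl _)
        · exact Or.inr (Reachable.refl _)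
      · have hb : (G.deleteEdges {s(u,v)}).Reachable b u ∨ (G.deleteEdges {s(u,v)}).Reachable b v := by
          rcases hc with ⟨rfl, rfl⟩ | ⟨rfl, rfl⟩
          · exact Or.inr (Reachable.refl _)
          · exact Or.inl (Reachable.refl _)
        rcases ih with hbc | ⟨_, hcuv⟩
        · rcases hb with h1 | h1
          · exact Or.inl (hbc.symm.trans h1)
          · exact Or.inr (hbc.symm.trans h1)
        · exact hcuv
    · have hab : (G.deleteEdges {s(u,v)}).Adj a b := by
        rw [deleteEdges_adj]
        exact ⟨hadj, by simpa using hc⟩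
      rcases ih with hbc | ⟨hbuv, hcuv⟩
      · exact Or.inl (hab.reachable.trans hbc)
      · exact Or.inr ⟨hbuv.imp hab.reachable.trans hab.reachable.trans, hcuv⟩

private lemma card_cc_nonbridge [Finite V] {G : SimpleGraph V} {u v : V}
    (h : (G.deleteEdges {s(u,v)}).Reachable u v) :
    Nat.card (G.deleteEdges {s(u,v)}).ConnectedComponent = Nat.card G.ConnectedComponent := by
  set G' := G.deleteEdges {s(u,v)} with hG'
  have key : ∀ w x : V, G.Reachable w x → G'.Reachable w x := by
    intro w x hr
    obtain ⟨p⟩ := hr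
    rcases reach_del_aux G u v p with h1 | ⟨hw | hw, hx | hx⟩
    · exact h1
    · exact hw.trans hx.symm
    · exact hw.trans (h.trans hx.symm)
    · exact hw.trans (h.symm.trans hx.symm)
    · exact hw.trans hx.symm
  have hle : G' ≤ G := deleteEdges_le _
  let φ : G'.ConnectedComponent → G.ConnectedComponent :=
    ConnectedComponent.map (Hom.ofLE hle)
  have hbij : Function.Bijective φ := by
    constructor
    · refine ConnectedComponent.ind₂ (fun w x hwx => ?_)
      have : G.connectedComponentMk w = G.connectedComponentMk x := hwx
      exact ConnectedComponent.sound (key _ _ (ConnectedComponent.eq.mp this))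
    · refine ConnectedComponent.ind (fun w => ⟨G'.connectedComponentMk w, rfl⟩)
  exact Nat.card_eq_of_bijective φ hbij

private lemma card_cc_bridge [Finite V] {G : SimpleGraph V} {u v : V} (hadj : G.Adj u v)
    (h : ¬ (G.deleteEdges {s(u,v)}).Reachable u v) :
    Nat.card (G.deleteEdges {s(u,v)}).ConnectedComponent = Nat.card G.ConnectedComponent + 1 := by
  classical
  set G' := G.deleteEdges {s(u,v)} with hG'
  have hle : G' ≤ G := deleteEdges_le _
  let φ : G'.ConnectedComponent → G.ConnectedComponent :=
    ConnectedComponent.map (Hom.ofLE hle)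
  have hφ : ∀ w : V, φ (G'.connectedComponentMk w) = G.connectedComponentMk w := fun w => rfl
  have hFin : Fintype (G'.ConnectedComponent) := Fintype.ofFinite _
  have hFin2 : Fintype (G.ConnectedComponent) := Fintype.ofFinite _
  have huv2 : ∀ w : V, G.Reachable w u →
      G'.Reachable w u ∨ G'.Reachable w v := by
    intro w hr
    obtain ⟨p⟩ := hr
    rcases reach_del_aux G u v p with h1 | ⟨hw, _⟩
    · exact Or.inl h1
    · exact hw
  set C0 := G.connectedComponentMk u with hC0
  have fib0 : (Finset.univ.filter fun K => φ K = C0) =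
      {G'.connectedComponentMk u, G'.connectedComponentMk v} := by
    ext K
    simp only [Finset.mem_filter, Finset.mem_univ, true_and, Finset.mem_insert,
      Finset.mem_singleton]
    constructor
    · refine ConnectedComponent.ind (fun w => ?_) K
      intro hw
      rw [hφ] at hw
      have hr : G.Reachable w u := ConnectedComponent.eq.mp hw
      rcases huv2 w hr with h1 | h1
      · exact Or.inl (ConnectedComponent.sound h1)
      · exact Or.inr (ConnectedComponent.sound h1)
    · rintro (rfl | rfl)
      · exact rfl
      · rw [hφ]
        exact ConnectedComponent.sound hadj.symm.reachable
  have fib0card : (Finset.univ.filter fun K => φ K = C0).card = 2 := by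
    rw [fib0]
    rw [Finset.card_insert_of_notMem, Finset.card_singleton]
    simp only [Finset.mem_singleton]
    intro hc
    exact h (ConnectedComponent.eq.mp hc)
  have fib1 : ∀ C : G.ConnectedComponent, C ≠ C0 →
      (Finset.univ.filter fun K => φ K = C).card = 1 := by
    intro C hC
    obtain ⟨w, rfl⟩ := C.exists_rep
    rw [Finset.card_eq_one]
    refine ⟨G'.connectedComponentMk w, ?_⟩
    ext K
    simp only [Finset.mem_filter, Finset.mem_univ, true_and, Finset.mem_singleton]
    constructor
    · refine ConnectedComponent.ind (fun x => ?_) K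
      intro hx
      rw [hφ] at hx
      have hr : G.Reachable x w := ConnectedComponent.eq.mp hx
      obtain ⟨p⟩ := hr
      rcases reach_del_aux G u v p with h1 | ⟨_, hw | hw⟩
      · exact ConnectedComponent.sound h1
      · exact absurd (ConnectedComponent.sound (hw.mono hle)) hC
      · refine absurd ?_ hC
        have : G.Reachable w v := hw.mono hle
        exact ConnectedComponent.sound (this.trans hadj.symm.reachable)
    · rintro rfl
      exact rfl
  have hcount : Fintype.card G'.ConnectedComponent =
      ∑ C : G.ConnectedComponent, (Finset.univ.filter fun K => φ K = C).card := by
    exact Finset.card_eq_sum_card_fiberwise (fun x _ => Finset.mem_univ (φ x))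
  have hsum : ∑ C : G.ConnectedComponent, (Finset.univ.filter fun K => φ K = C).card
      = Fintype.card G.ConnectedComponent + 1 := by
    rw [← Finset.sum_erase_add _ _ (Finset.mem_univ C0), fib0card]
    rw [Finset.sum_congr rfl (fun C hC => fib1 C (Finset.mem_erase.mp hC).1)]
    rw [Finset.sum_const, smul_eq_mul, mul_one,
      Finset.card_erase_of_mem (Finset.mem_univ C0)]
    have : 0 < Fintype.card G.ConnectedComponent := Fintype.card_pos_iff.mpr ⟨C0⟩
    simp only [Finset.card_univ]
    omega
  rw [Nat.card_eq_fintype_card, Nat.card_eq_fintype_card, hcount, hsum]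

private lemma card_cc_deleteEdges_le [Finite V] (G : SimpleGraph V) (u v : V) :
    Nat.card (G.deleteEdges {s(u,v)}).ConnectedComponent ≤ Nat.card G.ConnectedComponent + 1 := by
  by_cases hadj : G.Adj u v
  · by_cases hr : (G.deleteEdges {s(u,v)}).Reachable u v
    · rw [card_cc_nonbridge hr]; omega
    · rw [card_cc_bridge hadj hr]
  · have : G.deleteEdges {s(u,v)} = G := by
      rw [deleteEdges_eq_self]
      simpa [Set.disjoint_singleton_right] using hadj
    rw [this]; omega

private lemma split_pairs [DecidableEq V] (P : Finset (V × V)) {i j : V}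
    (hij : (i, j) ∈ P) (hsymm : ∀ p ∈ P, (p.2, p.1) ∈ P) (hirr : ∀ p ∈ P, p.1 ≠ p.2) :
    ∃ P' : Finset (V × V), P'.card + 2 = P.card ∧ (∀ p ∈ P', (p.2, p.1) ∈ P') ∧
      (∀ p ∈ P', p.1 ≠ p.2) ∧ (∀ p ∈ P', p ∈ P ∧ s(p.1, p.2) ≠ s(i, j)) ∧
      Function.uncurry Sym2.mk '' (↑P : Set (V × V)) = {s(i, j)} ∪ Function.uncurry Sym2.mk '' (↑P' : Set (V × V)) := by
  have hne : i ≠ j := hirr _ hij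
  have hji : (j, i) ∈ P := hsymm _ hij
  refine ⟨(P.erase (i, j)).erase (j, i), ?_, ?_, ?_, ?_, ?_⟩
  · rw [Finset.card_erase_of_mem, Finset.card_erase_of_mem hij]
    · have : 0 < P.card := Finset.card_pos.mpr ⟨_, hij⟩
      have h2 : 2 ≤ P.card := by
        rw [← Finset.card_erase_add_one hij]
        have : 0 < (P.erase (i, j)).card := Finset.card_pos.mpr
          ⟨(j, i), Finset.mem_erase.mpr ⟨by simp [Prod.ext_iff, hne, Ne.symm hne], hji⟩⟩
        omega
      omega
    · exact Finset.mem_erase.mpr ⟨by simp [Prod.ext_iff, hne, Ne.symm hne], hji⟩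
  · intro p hp
    rw [Finset.mem_erase, Finset.mem_erase] at hp ⊢
    refine ⟨?_, ?_, hsymm _ hp.2.2⟩
    · intro hc; apply hp.2.1; rw [Prod.ext_iff] at hc ⊢; exact ⟨hc.2, hc.1⟩
    · intro hc; apply hp.1; rw [Prod.ext_iff] at hc ⊢; exact ⟨hc.2, hc.1⟩
  · intro p hp
    exact hirr _ (Finset.mem_erase.mp (Finset.mem_erase.mp hp).2).2
  · intro p hp
    rw [Finset.mem_erase, Finset.mem_erase] at hp
    refine ⟨hp.2.2, ?_⟩
    intro hc
    rw [Sym2.eq_iff] at hc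
    rcases hc with ⟨h1, h2⟩ | ⟨h1, h2⟩
    · exact hp.2.1 (Prod.ext h1 h2)
    · exact hp.1 (Prod.ext h1 h2)
  · ext e
    simp only [Set.mem_image, Finset.mem_coe, Set.mem_union, Set.mem_singleton_iff]
    constructor
    · rintro ⟨p, hp, rfl⟩
      by_cases h1 : p = (i, j)
      · subst h1; exact Or.inl rfl
      by_cases h2 : p = (j, i)
      · subst h2; exact Or.inl (Sym2.eq_swap)
      · exact Or.inr ⟨p, Finset.mem_erase.mpr ⟨h2, Finset.mem_erase.mpr ⟨h1, hp⟩⟩, rfl⟩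
    · rintro (rfl | ⟨p, hp, rfl⟩)
      · exact ⟨(i, j), hij, rfl⟩
      · exact ⟨p, (Finset.mem_erase.mp (Finset.mem_erase.mp hp).2).2, rfl⟩

private lemma isBridge_mono {G H : SimpleGraph V} (hle : H ≤ G) {u v : V}
    (he : H.Adj u v) (hb : G.IsBridge s(u, v)) : H.IsBridge s(u, v) := by
  rw [isBridge_iff] at hb ⊢
  refine fun hr => hb (hr.mono ?_)
  exact sdiff_le_sdiff_right hle

private lemma cc_pairs_le [Finite V] [DecidableEq V] :
    ∀ (n : ℕ) (P : Finset (V × V)) (G : SimpleGraph V), P.card = n →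
      (∀ p ∈ P, (p.2, p.1) ∈ P) → (∀ p ∈ P, p.1 ≠ p.2) →
      Nat.card (G.deleteEdges (Function.uncurry Sym2.mk '' ↑P)).ConnectedComponent * 2 ≤
        Nat.card G.ConnectedComponent * 2 + P.card := by
  intro n
  induction n using Nat.strong_induction_on with
  | _ n ih =>
    intro P G hcard hsymm hirr
    rcases Finset.eq_empty_or_nonempty P with rfl | ⟨⟨i, j⟩, hij⟩
    · simp
    obtain ⟨P', hc2, hs', hi', _, himg⟩ := split_pairs P hij hsymm hirr
    rw [himg, ← deleteEdges_deleteEdges]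
    have h1 := ih P'.card (by omega) P' (G.deleteEdges {s(i, j)}) rfl hs' hi'
    have h2 := card_cc_deleteEdges_le G i j
    omega

private lemma cc_pairs_eq [Finite V] [DecidableEq V] :
    ∀ (n : ℕ) (P : Finset (V × V)) (G : SimpleGraph V), P.card = n →
      (∀ p ∈ P, (p.2, p.1) ∈ P) → (∀ p ∈ P, p.1 ≠ p.2) →
      (∀ p ∈ P, G.Adj p.1 p.2 ∧ G.IsBridge s(p.1, p.2)) →
      Nat.card (G.deleteEdges (Function.uncurry Sym2.mk '' ↑P)).ConnectedComponent * 2 =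
        Nat.card G.ConnectedComponent * 2 + P.card := by
  intro n
  induction n using Nat.strong_induction_on with
  | _ n ih =>
    intro P G hcard hsymm hirr hbr
    rcases Finset.eq_empty_or_nonempty P with rfl | ⟨⟨i, j⟩, hij⟩
    · simp
    obtain ⟨P', hc2, hs', hi', hmem, himg⟩ := split_pairs P hij hsymm hirr
    rw [himg, ← deleteEdges_deleteEdges]
    have hbrij := hbr _ hij
    have hadj : G.Adj i j := hbrij.1
    have hdel : Nat.card (G.deleteEdges {s(i, j)}).ConnectedComponent
        = Nat.card G.ConnectedComponent + 1 := card_cc_bridge hadj hbrij.2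
    have hbr' : ∀ p ∈ P', (G.deleteEdges {s(i, j)}).Adj p.1 p.2 ∧
        (G.deleteEdges {s(i, j)}).IsBridge s(p.1, p.2) := by
      intro p hp
      obtain ⟨hpP, hpne⟩ := hmem _ hp
      have hadj' : (G.deleteEdges {s(i, j)}).Adj p.1 p.2 := by
        rw [deleteEdges_adj]
        exact ⟨(hbr _ hpP).1, by simpa using hpne⟩
      exact ⟨hadj', isBridge_mono (deleteEdges_le _) hadj' (hbr _ hpP).2⟩
    have h1 := ih P'.card (by omega) P' (G.deleteEdges {s(i, j)}) rfl hs' hi' hbr'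
    omega

end Helpers

open SimpleGraph in
/-- Graph-theoretic step in Corollary 3.10: `#S(D) = c − 1` (i.e. `Γ(S)` is a tree, where `c`
is the number of level components) iff every node in `S(D)` is separating. The ordered double
sum counts each node of `S(D)` twice. -/
theorem betti_zero_iff_separating [Fintype V] [DecidableEq V] [Nonempty V]
    (m : V → V → ℕ) (hsym : ∀ i j, m i j = m j i) (hdiag : ∀ i, m i i = 0)
    (G : SimpleGraph V) (hG : ∀ i j, G.Adj i j ↔ i ≠ j ∧ 0 < m i j)
    (hconn : G.Connected) (D : V → ℤ)
    (GD : SimpleGraph V) (hGD : ∀ i j, GD.Adj i j ↔ i ≠ j ∧ 0 < m i j ∧ D i = D j)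
    (c : ℕ) (hc : c = Nat.card GD.ConnectedComponent) :
    ((∑ i, ∑ j, if D i ≠ D j then (m i j) else 0 : ℕ) : ℤ) = 2 * ((c : ℤ) - 1) ↔
      ∀ i j, 0 < m i j → D i ≠ D j → Separating m G i j := by
  classical
  set P : Finset (V × V) := (Finset.univ ×ˢ Finset.univ).filter
    (fun p => 0 < m p.1 p.2 ∧ D p.1 ≠ D p.2) with hP
  have hPmem : ∀ p : V × V, p ∈ P ↔ (0 < m p.1 p.2 ∧ D p.1 ≠ D p.2) := by
    intro p; simp [hP]
  have hPsym : ∀ p ∈ P, (p.2, p.1) ∈ P := by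
    intro p hp
    rw [hPmem] at hp ⊢
    exact ⟨by rw [← hsym]; exact hp.1, fun h => hp.2 h.symm⟩
  have hPirr : ∀ p ∈ P, p.1 ≠ p.2 := by
    intro p hp h
    exact ((hPmem p).mp hp).2 (congrArg D h)
  have hmemS : ∀ i j : V, s(i, j) ∈ Function.uncurry Sym2.mk '' (↑P : Set (V × V)) ↔
      (0 < m i j ∧ D i ≠ D j) := by
    intro i j
    constructor
    · rintro ⟨⟨a, b⟩, hab, heq⟩
      rw [Finset.mem_coe, hPmem] at hab
      rw [Function.uncurry_apply_pair, Sym2.eq_iff] at heq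
      rcases heq with ⟨rfl, rfl⟩ | ⟨rfl, rfl⟩
      · exact hab
      · exact ⟨by rw [hsym]; exact hab.1, fun h => hab.2 h.symm⟩
    · intro h
      exact ⟨(i, j), by rw [Finset.mem_coe, hPmem]; exact h, rfl⟩
  have hGDeq : GD = G.deleteEdges (Function.uncurry Sym2.mk '' (↑P : Set (V × V))) := by
    ext i j
    rw [hGD, deleteEdges_adj, hG, hmemS]
    by_cases h1 : D i = D j <;> by_cases h2 : 0 < m i j <;> by_cases h3 : i = j <;>
      simp [h1, h2, h3]
  have hcard1 : Nat.card G.ConnectedComponent = 1 := by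
    rw [Nat.card_eq_one_iff_unique]
    constructor
    · exact ⟨ConnectedComponent.ind₂ fun v w =>
        ConnectedComponent.sound (hconn.preconnected v w)⟩
    · exact ⟨G.connectedComponentMk (Classical.arbitrary V)⟩
  have hc' : c * 2 = Nat.card
      (G.deleteEdges (Function.uncurry Sym2.mk '' (↑P : Set (V × V)))).ConnectedComponent * 2 := by
    rw [hc, hGDeq]
  have hN : (∑ i, ∑ j, if D i ≠ D j then (m i j) else 0) = ∑ p ∈ P, m p.1 p.2 := by
    rw [← Finset.sum_product']
    rw [show (∑ p ∈ Finset.univ ×ˢ Finset.univ, if D p.1 ≠ D p.2 then m p.1 p.2 else 0)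
        = ∑ p ∈ (Finset.univ ×ˢ Finset.univ).filter (fun p : V × V => D p.1 ≠ D p.2),
          m p.1 p.2 from (Finset.sum_filter _ _).symm]
    refine (Finset.sum_subset ?_ ?_).symm
    · intro p hp
      rw [hPmem] at hp
      simp [hp.2]
    · intro p hp hnp
      rw [hPmem] at hnp
      simp only [Finset.mem_filter] at hp
      by_contra hne
      exact hnp ⟨Nat.pos_of_ne_zero hne, hp.2⟩
  constructor
  · intro hEq i j hm hD
    by_contra hns
    have hPm : (i, j) ∈ P := (hPmem _).mpr ⟨hm, hD⟩
    have hup : Nat.card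
        (G.deleteEdges (Function.uncurry Sym2.mk '' (↑P : Set (V × V)))).ConnectedComponent * 2 ≤
        1 * 2 + P.card := by
      have h := cc_pairs_le P.card P G rfl hPsym hPirr
      rw [hcard1] at h
      exact h
    have hNge : P.card ≤ ∑ p ∈ P, m p.1 p.2 := by
      rw [Finset.card_eq_sum_ones]
      exact Finset.sum_le_sum fun p hp => ((hPmem p).mp hp).1
    rw [Separating, not_and_or] at hns
    rcases hns with hm1 | hbr
    · -- m i j ≥ 2
      have hlt : P.card < ∑ p ∈ P, m p.1 p.2 := by
        rw [Finset.card_eq_sum_ones]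
        refine Finset.sum_lt_sum (fun p hp => ((hPmem p).mp hp).1) ⟨(i, j), hPm, ?_⟩
        show 1 < m i j
        omega
      rw [hN] at hEq
      omega
    · -- not a bridge
      have hadj : G.Adj i j := (hG i j).mpr ⟨fun h => hD (congrArg D h), hm⟩
      have hr : (G.deleteEdges {s(i, j)}).Reachable i j := by
        rw [isBridge_iff, not_not] at hbr; exact hbr
      obtain ⟨P', hc2, hs', hi', _, himg⟩ := split_pairs P hPm hPsym hPirr
      have h1 := cc_pairs_le P'.card P' (G.deleteEdges {s(i, j)}) rfl hs' hi'
      have h2 : Nat.card (G.deleteEdges {s(i, j)}).ConnectedComponent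
          = Nat.card G.ConnectedComponent := card_cc_nonbridge hr
      have h3 : Nat.card
          (G.deleteEdges (Function.uncurry Sym2.mk '' (↑P : Set (V × V)))).ConnectedComponent * 2 ≤
          1 * 2 + P'.card := by
        rw [himg, ← deleteEdges_deleteEdges]
        omega
      rw [hN] at hEq
      omega
  · intro hsep
    have hbrall : ∀ p ∈ P, G.Adj p.1 p.2 ∧ G.IsBridge s(p.1, p.2) := by
      intro p hp
      rw [hPmem] at hp
      exact ⟨(hG _ _).mpr ⟨fun h => hp.2 (congrArg D h), hp.1⟩, (hsep p.1 p.2 hp.1 hp.2).2⟩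
    have heq := cc_pairs_eq P.card P G rfl hPsym hPirr hbrall
    rw [hcard1] at heq
    have hNP : (∑ i, ∑ j, if D i ≠ D j then (m i j) else 0) = P.card := by
      rw [hN, Finset.card_eq_sum_ones]
      exact Finset.sum_congr rfl fun p hp =>
        (hsep p.1 p.2 ((hPmem p).mp hp).1 ((hPmem p).mp hp).2).1
    rw [← hc'] at heq
    rw [hNP]
    omega
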